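/- Let M be a compact metric space, φ: M → M continuous, G = {G_n} an asymptotically additive sequence, and P a Borel probability measure on M with supp(P) = M. Assume that for every ε > 0 there are constants K_n(ε) ≥ 1 with lim_{ε↓0} limsup_n (1/n) log K_n(ε) = 0 such that for every n ≥ 1 the two-sided bound K_n(ε)^{−1} e^{G_n(x) − n p_φ(G)} ≤ P(B_n(x,ε)) ≤ K_n(ε) e^{G_n(x) − n p_φ(G)} holds for P-almost every x ∈ M. Then P is a weak Gibbs measure for G, i.e., the same type of bounds (with possibly modified constants K'_n(ε) still satisfying lim_{ε↓0} limsup_n (1/n) log K'_n(ε) = 0) hold for every x ∈ M. -/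

import Mathlib

open MeasureTheory Filter Topology Set
open scoped ENNReal
set_option linter.unusedSectionVars false

variable {M : Type*} [MetricSpace M] [CompactSpace M] [MeasurableSpace M] [BorelSpace M]

/-- Birkhoff sum `S_n V = ∑_{j<n} V ∘ φ^j`. -/
noncomputable def birkhoff (φ : M → M) (V : M → ℝ) (n : ℕ) (x : M) : ℝ :=
  ∑ j ∈ Finset.range n, V (φ^[j] x)

/-- Supremum norm `‖f‖_∞` valued in `ℝ≥0∞`. -/
noncomputable def supNorm (f : M → ℝ) : ℝ≥0∞ :=
  ⨆ x : M, ENNReal.ofReal |f x|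

/-- `Gk` is an approximating sequence for `G`:
`lim_{k→∞} limsup_{n→∞} (1/n) ‖G_n − S_n G^{(k)}‖_∞ = 0`. -/
def ApproxSeq (φ : M → M) (G : ℕ → M → ℝ) (Gk : ℕ → M → ℝ) : Prop :=
  Tendsto
    (fun k => Filter.limsup
      (fun n => supNorm (fun x => G n x - birkhoff φ (Gk k) n x) / (n : ℝ≥0∞)) atTop)
    atTop (nhds 0)

/-- `G = {G_n}` is an asymptotically additive sequence of bounded Borel functions. -/
def AsympAdd (φ : M → M) (G : ℕ → M → ℝ) : Prop :=
  (∀ n, Measurable (G n) ∧ ∃ C : ℝ, ∀ x, |G n x| ≤ C) ∧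
  ∃ Gk : ℕ → M → ℝ, (∀ k, Continuous (Gk k)) ∧ ApproxSeq φ G Gk

/-- Bowen ball `B_n(x, ε)`. -/
def bowenBall (φ : M → M) (n : ℕ) (x : M) (ε : ℝ) : Set M :=
  {y | ∀ k < n, dist (φ^[k] y) (φ^[k] x) < ε}

/-- `E` is `(ε,n)`-spanning. -/
def IsSpanning (φ : M → M) (n : ℕ) (ε : ℝ) (E : Finset M) : Prop :=
  ∀ x : M, ∃ y ∈ E, x ∈ bowenBall φ n y ε

/-- `E` is `(ε,n)`-separated. -/
def IsSeparated (φ : M → M) (n : ℕ) (ε : ℝ) (E : Finset M) : Prop :=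
  ∀ x ∈ E, ∀ y ∈ E, x ≠ y → x ∉ bowenBall φ n y ε

/-- `S(G,ε,n)`. -/
noncomputable def spanSum (φ : M → M) (G : ℕ → M → ℝ) (ε : ℝ) (n : ℕ) : ℝ≥0∞ :=
  ⨅ (E : Finset M) (_ : IsSpanning φ n ε E), ∑ x ∈ E, ENNReal.ofReal (Real.exp (G n x))

/-- `N(G,ε,n)`. -/
noncomputable def sepSum (φ : M → M) (G : ℕ → M → ℝ) (ε : ℝ) (n : ℕ) : ℝ≥0∞ :=
  ⨆ (E : Finset M) (_ : IsSeparated φ n ε E), ∑ x ∈ E, ENNReal.ofReal (Real.exp (G n x))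

/-- Topological pressure of an asymptotically additive sequence, via `(ε,n)`-separated sets. -/
noncomputable def pressure (φ : M → M) (G : ℕ → M → ℝ) : EReal :=
  ⨆ (ε : ℝ) (_ : 0 < ε),
    Filter.limsup (fun n : ℕ => (((n : ℝ)⁻¹ : ℝ) : EReal) * ENNReal.log (sepSum φ G ε n)) atTop

/-- Entropy of the partition of `M` induced by a map into a finite type. -/
noncomputable def mapEntropy (μ : Measure M) {α : Type} [Fintype α] (c : M → α) : ℝ :=
  ∑ a : α, Real.negMulLog ((μ (c ⁻¹' {a})).toReal)

/-- Kolmogorov–Sinai entropy of `φ` along a finite partition `P` (encoded as `P : M → Fin m`). -/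
noncomputable def partKS (φ : M → M) (μ : Measure M) {m : ℕ} (P : M → Fin m) : ℝ :=
  ⨅ n : ℕ, ((n : ℝ) + 1)⁻¹ *
    mapEntropy μ (fun x => fun i : Fin (n + 1) => P (φ^[(i : ℕ)] x))

/-- Kolmogorov–Sinai entropy `h_φ(μ)`. -/
noncomputable def ksEntropy (φ : M → M) (μ : Measure M) : ℝ≥0∞ :=
  ⨆ (m : ℕ) (P : M → Fin m) (_ : Measurable P), ENNReal.ofReal (partKS φ μ P)

/-- Set of `n`-periodic points of `φ`. -/
def perSet (φ : M → M) (n : ℕ) : Set M := {x | φ^[n] x = x}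

/-- `Z_n(G) = ∑_{x ∈ M_n} e^{G_n(x)}`, as an extended nonnegative real. -/
noncomputable def perPartition (φ : M → M) (G : ℕ → M → ℝ) (n : ℕ) : ℝ≥0∞ :=
  ∑' x : perSet φ n, ENNReal.ofReal (Real.exp (G n x))

/-- The periodic-orbit measure `P_n = Z_n⁻¹ ∑_{x ∈ M_n} e^{G_n(x)} δ_x`. -/
noncomputable def perGibbs (φ : M → M) (G : ℕ → M → ℝ) (n : ℕ) : Measure M :=
  (perPartition φ G n)⁻¹ •
    Measure.sum (fun x : perSet φ n => ENNReal.ofReal (Real.exp (G n x)) • Measure.dirac (x : M))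

/-- Weak periodic specification property. -/
def WPS (φ : M → M) : Prop :=
  ∃ m : ℝ → ℕ → ℕ, ∃ N : ℝ → ℕ,
    (∀ δ : ℝ, 0 < δ → ∀ n, N δ ≤ n → m δ n < n) ∧
    (∀ δ : ℝ, 0 < δ → ∀ n, N δ ≤ n → ∀ x : M,
      ∃ y ∈ perSet φ n, y ∈ bowenBall φ (n - m δ n) x δ) ∧
    Tendsto (fun δ : ℝ => Filter.limsup (fun n => (m δ n : ℝ≥0∞) / (n : ℝ≥0∞)) atTop)
      (𝓝[>] (0 : ℝ)) (nhds 0)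

/-- Specification property (S). -/
def SpecProp (φ : M → M) : Prop :=
  ∀ δ : ℝ, 0 < δ → ∃ N : ℕ, ∀ (r : ℕ) (a b : Fin r → ℕ) (pts : Fin r → M),
    (∀ i, a i ≤ b i) →
    (∀ i j, i ≠ j → ∀ k, a i ≤ k → k ≤ b i → ∀ l, a j ≤ l → l ≤ b j → N ≤ Nat.dist k l) →
    ∃ x : M, ∀ i, ∀ k, a i ≤ k → k ≤ b i → dist (φ^[k] x) (φ^[k] (pts i)) < δ

/-- Condition (PAP): finitely many periodic points and periodic approximation of pressure. -/
def PAP (φ : M → M) : Prop :=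
  (∀ n : ℕ, 0 < n → (perSet φ n).Finite) ∧
  ∀ G : ℕ → M → ℝ, AsympAdd φ G →
    Tendsto (fun n : ℕ => (((n : ℝ)⁻¹ : ℝ) : EReal) * ENNReal.log (perPartition φ G n)) atTop
      (nhds (pressure φ G))

/-- Condition (USCE): finite topological entropy and upper semicontinuous entropy map. -/
def USCE (φ : M → M) : Prop :=
  pressure φ (fun _ _ => (0 : ℝ)) ≠ ⊤ ∧
  UpperSemicontinuousOn (fun μ : ProbabilityMeasure M => ksEntropy φ (μ : Measure M))
    {μ : ProbabilityMeasure M | (μ : Measure M).map φ = (μ : Measure M)}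

/-- Empirical measure `μ_n^x`. -/
noncomputable def empMeas (φ : M → M) (n : ℕ) (x : M) : Measure M :=
  ((n : ℝ≥0∞))⁻¹ • ∑ i ∈ Finset.range n, Measure.dirac (φ^[i] x)

/-- Weak Gibbs property of `P` for `G`, with (finite, real) pressure `p`. -/
def WeakGibbs (φ : M → M) (G : ℕ → M → ℝ) (p : ℝ) (P : Measure M) : Prop :=
  ∃ K : ℕ → ℝ → ℝ,
    (∀ n : ℕ, ∀ ε : ℝ, 0 < ε → 1 ≤ K n ε) ∧
    (∀ n : ℕ, 0 < n → ∀ ε : ℝ, 0 < ε → ∀ x : M,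
      ENNReal.ofReal (Real.exp (G n x - n * p)) / ENNReal.ofReal (K n ε)
          ≤ P (bowenBall φ n x ε) ∧
      P (bowenBall φ n x ε)
          ≤ ENNReal.ofReal (K n ε) * ENNReal.ofReal (Real.exp (G n x - n * p))) ∧
    Tendsto (fun ε : ℝ => Filter.limsup (fun n => ENNReal.ofReal (Real.log (K n ε) / n)) atTop)
      (𝓝[>] (0 : ℝ)) (nhds 0)

/-- **Almost-everywhere Gibbs bounds plus full support imply the weak Gibbs property.**
Let `G` be asymptotically additive with (finite) pressure `p`, and let `P` be a Borel
probability measure with full support.  If for every `n ≥ 1` and `ε > 0` the two-sided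
bound `K_n(ε)^{-1} e^{G_n(x) − n p} ≤ P(B_n(x,ε)) ≤ K_n(ε) e^{G_n(x) − n p}` holds for
`P`-almost every `x`, with constants `K_n(ε) ≥ 1` satisfying
`lim_{ε↓0} limsup_n (1/n) log K_n(ε) = 0`, then `P` is a weak Gibbs measure for `G`. -/
lemma wg_limsup_add_le {ι : Type*} {f : Filter ι} (u v : ι → ℝ≥0∞) :
    Filter.limsup (fun x => u x + v x) f ≤ Filter.limsup u f + Filter.limsup v f := by
  by_cases hu : Filter.limsup u f = ⊤
  · rw [hu, top_add]; exact le_top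
  by_cases hv : Filter.limsup v f = ⊤
  · rw [hv, add_top]; exact le_top
  refine ENNReal.le_of_forall_pos_le_add fun ε hε _ => ?_
  have hε2 : ((ε : ℝ≥0∞) / 2) ≠ 0 := by
    simp [ENNReal.div_eq_zero_iff, hε.ne']
  have hu2 : Filter.limsup u f < Filter.limsup u f + (ε : ℝ≥0∞) / 2 :=
    ENNReal.lt_add_right hu hε2
  have hv2 : Filter.limsup v f < Filter.limsup v f + (ε : ℝ≥0∞) / 2 :=
    ENNReal.lt_add_right hv hε2
  have h1 := Filter.eventually_lt_of_limsup_lt hu2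
  have h2 := Filter.eventually_lt_of_limsup_lt hv2
  refine Filter.limsup_le_of_le (by isBoundedDefault) ?_
  filter_upwards [h1, h2] with x hx1 hx2
  have hhalves : (ε : ℝ≥0∞) / 2 + (ε : ℝ≥0∞) / 2 = (ε : ℝ≥0∞) := ENNReal.add_halves _
  calc u x + v x ≤ (Filter.limsup u f + (ε : ℝ≥0∞) / 2) + (Filter.limsup v f + (ε : ℝ≥0∞) / 2) :=
        add_le_add hx1.le hx2.le
    _ = Filter.limsup u f + Filter.limsup v f + ((ε : ℝ≥0∞) / 2 + (ε : ℝ≥0∞) / 2) := by ring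
    _ = Filter.limsup u f + Filter.limsup v f + (ε : ℝ≥0∞) := by rw [hhalves]

lemma wg_exists_abs_bound {f : M → ℝ} (hf : Continuous f) : ∃ C : ℝ, 0 ≤ C ∧ ∀ x, |f x| ≤ C := by
  rcases isEmpty_or_nonempty M with h | h
  · exact ⟨0, le_refl 0, fun x => (IsEmpty.false x).elim⟩
  · obtain ⟨x₀, -, hx₀⟩ := isCompact_univ.exists_isMaxOn univ_nonempty
      ((continuous_abs.comp hf).continuousOn)
    exact ⟨|f x₀|, abs_nonneg _, fun x => hx₀ (mem_univ x)⟩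

lemma wg_isOpen_bowenBall (φ : M → M) (hφ : Continuous φ) (n : ℕ) (x : M) (ε : ℝ) :
    IsOpen (bowenBall φ n x ε) := by
  have h : bowenBall φ n x ε = ⋂ k ∈ Finset.range n, (φ^[k]) ⁻¹' Metric.ball (φ^[k] x) ε := by
    ext y; simp [bowenBall, Metric.mem_ball]
  rw [h]
  exact isOpen_biInter_finset fun k _ => (Metric.isOpen_ball).preimage (hφ.iterate k)

lemma wg_self_mem_bowenBall (φ : M → M) (n : ℕ) (x : M) {ε : ℝ} (hε : 0 < ε) :
    x ∈ bowenBall φ n x ε := fun k _ => by simp [hε]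

lemma wg_supNorm_le {f : M → ℝ} {C : ℝ} (h : ∀ x, |f x| ≤ C) : supNorm f ≤ ENNReal.ofReal C :=
  iSup_le fun x => ENNReal.ofReal_le_ofReal (h x)

lemma wg_abs_le_toReal_supNorm {f : M → ℝ} (h : supNorm f ≠ ⊤) (x : M) :
    |f x| ≤ (supNorm f).toReal := by
  have h1 : ENNReal.ofReal |f x| ≤ supNorm f := le_iSup (fun x => ENNReal.ofReal |f x|) x
  have := ENNReal.toReal_mono h h1
  rwa [ENNReal.toReal_ofReal (abs_nonneg _)] at this

lemma wg_exists_good_point (P : Measure M)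
    (hsupp : ∀ U : Set M, IsOpen U → U.Nonempty → 0 < P U) {U : Set M} (hU : IsOpen U)
    (hne : U.Nonempty) {Q : M → Prop} (hQ : ∀ᵐ x ∂P, Q x) : ∃ y ∈ U, Q y := by
  by_contra h
  push_neg at h
  exact absurd (measure_mono_null (fun y hy => h y hy) (ae_iff.mp hQ)) (hsupp U hU hne).ne'

noncomputable def wgDelta (d : ℕ → ℝ) : ℕ → ℝ
  | 0 => d 0
  | (m + 1) => min (d (m + 1)) (wgDelta d m / 2)

lemma wgDelta_pos {d : ℕ → ℝ} (hd : ∀ m, 0 < d m) : ∀ m, 0 < wgDelta d m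
  | 0 => hd 0
  | (m + 1) => lt_min (hd (m + 1)) (by have := wgDelta_pos hd m; linarith)

lemma wgDelta_le (d : ℕ → ℝ) (m : ℕ) : wgDelta d m ≤ d m := by
  cases m with
  | zero => exact le_refl _
  | succ m => exact min_le_left _ _

lemma wgDelta_anti {d : ℕ → ℝ} (hd : ∀ m, 0 < d m) : Antitone (wgDelta d) := by
  apply antitone_nat_of_succ_le
  intro m
  have := wgDelta_pos hd m
  calc wgDelta d (m + 1) ≤ wgDelta d m / 2 := min_le_right _ _
    _ ≤ wgDelta d m := by linarith

lemma wgDelta_exists_lt {d : ℕ → ℝ} (hd : ∀ m, 0 < d m) {ε : ℝ} (hε : 0 < ε) :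
    ∃ m, wgDelta d m < ε := by
  have hhalf : ∀ m, wgDelta d m ≤ wgDelta d 0 * (1/2) ^ m := by
    intro m
    induction m with
    | zero => simp
    | succ m ih =>
      calc wgDelta d (m + 1) ≤ wgDelta d m / 2 := min_le_right _ _
        _ ≤ (wgDelta d 0 * (1/2) ^ m) / 2 := by linarith
        _ = wgDelta d 0 * (1/2) ^ (m + 1) := by ring
  obtain ⟨m, hm⟩ := exists_pow_lt_of_lt_one (div_pos hε (wgDelta_pos hd 0)) (by norm_num : (1:ℝ)/2 < 1)
  refine ⟨m, lt_of_le_of_lt (hhalf m) ?_⟩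
  have h0 := wgDelta_pos hd 0
  calc wgDelta d 0 * (1/2) ^ m < wgDelta d 0 * (ε / wgDelta d 0) := by
        apply mul_lt_mul_of_pos_left hm h0
    _ = ε := by field_simp


theorem weakGibbs_of_ae_bounds
    {M : Type*} [MetricSpace M] [CompactSpace M] [MeasurableSpace M] [BorelSpace M]
    (φ : M → M) (hφ : Continuous φ)
    (G : ℕ → M → ℝ) (hG : AsympAdd φ G)
    (p : ℝ) (hp : pressure φ G = (p : EReal))
    (P : Measure M) [IsProbabilityMeasure P]
    (hsupp : ∀ U : Set M, IsOpen U → U.Nonempty → 0 < P U)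
    (K : ℕ → ℝ → ℝ)
    (hK1 : ∀ n : ℕ, ∀ ε : ℝ, 0 < ε → 1 ≤ K n ε)
    (hKlim : Tendsto
      (fun ε : ℝ => Filter.limsup (fun n : ℕ => ENNReal.ofReal (Real.log (K n ε) / n)) atTop)
      (𝓝[>] (0 : ℝ)) (nhds 0))
    (hae : ∀ n : ℕ, 0 < n → ∀ ε : ℝ, 0 < ε →
      ∀ᵐ x ∂P,
        ENNReal.ofReal (Real.exp (G n x - n * p)) / ENNReal.ofReal (K n ε)
            ≤ P (bowenBall φ n x ε) ∧
        P (bowenBall φ n x ε)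
            ≤ ENNReal.ofReal (K n ε) * ENNReal.ofReal (Real.exp (G n x - n * p))) :
    WeakGibbs φ G p P := by
  classical
  obtain ⟨hGb, Gk, hGkc, hGka⟩ := hG
  set L : ℕ → ℝ≥0∞ := fun k =>
    Filter.limsup (fun n => supNorm (fun x => G n x - birkhoff φ (Gk k) n x) / (n : ℝ≥0∞)) atTop
    with hLdef
  have hNex : ∀ m : ℕ, ∃ k, L k < ((m : ℝ≥0∞) + 1)⁻¹ := by
    intro m
    have hpos : (0 : ℝ≥0∞) < ((m : ℝ≥0∞) + 1)⁻¹ := ENNReal.inv_pos.mpr (by simp)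
    exact (hGka.eventually_lt_const hpos).exists
  choose N hN using hNex
  have hUC : ∀ m : ℕ, ∃ δ : ℝ, 0 < δ ∧ ∀ a b : M, dist a b < δ →
      |Gk (N m) a - Gk (N m) b| < ((m : ℝ) + 1)⁻¹ := by
    intro m
    obtain ⟨δ, hδ, hmod⟩ := Metric.uniformContinuous_iff.mp
      (CompactSpace.uniformContinuous_of_continuous (hGkc (N m)))
      _ (by positivity : (0:ℝ) < ((m : ℝ) + 1)⁻¹)
    exact ⟨δ, hδ, fun a b hab => by simpa [Real.dist_eq] using hmod hab⟩
  choose d hd0 hdmod using hUC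
  have hδpos := wgDelta_pos hd0
  have hδanti := wgDelta_anti hd0
  obtain ⟨C0, hC0nn, hC0⟩ := wg_exists_abs_bound (hGkc (N 0))
  set q : ℝ → ℕ := fun ε => (if h : ∃ m, wgDelta d m < ε then Nat.find h else 0) - 1 with hqdef
  set c : ℝ → ℝ := fun ε => if ε ≤ wgDelta d (q ε) then ((q ε : ℝ) + 1)⁻¹ else 2 * C0 with hcdef
  have hcnn : ∀ ε, 0 ≤ c ε := by
    intro ε; rw [hcdef]; dsimp only; split <;> positivity
  have hqval : ∀ ε : ℝ, 0 < ε → ∀ h : ∃ m, wgDelta d m < ε, q ε = Nat.find h - 1 := by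
    intro ε hε h
    rw [hqdef]; dsimp only; rw [dif_pos h]
  have hqspec : ∀ ε : ℝ, 0 < ε → (ε ≤ wgDelta d (q ε)) ∨ q ε = 0 := by
    intro ε hε
    have hex : ∃ m, wgDelta d m < ε := wgDelta_exists_lt hd0 hε
    rcases Nat.eq_zero_or_pos (Nat.find hex) with h0 | h0
    · right; rw [hqval ε hε hex, h0]
    · left
      rw [hqval ε hε hex]
      have := Nat.find_min hex (Nat.sub_lt h0 one_pos)
      push_neg at this
      exact this
  have hqge : ∀ (Mi : ℕ) (ε : ℝ), 0 < ε → ε ≤ wgDelta d Mi →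
      Mi ≤ q ε ∧ ε ≤ wgDelta d (q ε) := by
    intro Mi ε hε hεM
    have hex : ∃ m, wgDelta d m < ε := wgDelta_exists_lt hd0 hε
    have hMlt : Mi < Nat.find hex := by
      by_contra h
      push_neg at h
      have h2 := hδanti h
      have h3 := Nat.find_spec hex
      linarith
    constructor
    · rw [hqval ε hε hex]; omega
    · rw [hqval ε hε hex]
      have := Nat.find_min hex (Nat.sub_lt (by omega) one_pos)
      push_neg at this
      exact this
  have hmod : ∀ ε : ℝ, 0 < ε → ∀ a b : M, dist a b < ε →
      |Gk (N (q ε)) a - Gk (N (q ε)) b| ≤ c ε := by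
    intro ε hε a b hab
    rw [hcdef]; dsimp only
    by_cases h : ε ≤ wgDelta d (q ε)
    · rw [if_pos h]
      exact (hdmod (q ε) a b (lt_of_lt_of_le hab (h.trans (wgDelta_le d (q ε))))).le
    · rw [if_neg h]
      have h0 : q ε = 0 := (hqspec ε hε).resolve_left h
      rw [h0]
      calc |Gk (N 0) a - Gk (N 0) b| ≤ |Gk (N 0) a| + |Gk (N 0) b| := abs_sub _ _
        _ ≤ C0 + C0 := add_le_add (hC0 a) (hC0 b)
        _ = 2 * C0 := by ring
  set A : ℕ → ℕ → ℝ := fun k n => (supNorm (fun x => G n x - birkhoff φ (Gk k) n x)).toReal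
    with hAdef
  have hfin : ∀ k n, supNorm (fun x => G n x - birkhoff φ (Gk k) n x) ≠ ⊤ := by
    intro k n
    obtain ⟨C, hC⟩ := (hGb n).2
    obtain ⟨B, hBnn, hB⟩ := wg_exists_abs_bound (hGkc k)
    have hb : ∀ x, |G n x - birkhoff φ (Gk k) n x| ≤ C + n * B := by
      intro x
      have h1 : |birkhoff φ (Gk k) n x| ≤ n * B := by
        unfold birkhoff
        calc |∑ j ∈ Finset.range n, Gk k (φ^[j] x)|
            ≤ ∑ j ∈ Finset.range n, |Gk k (φ^[j] x)| := Finset.abs_sum_le_sum_abs _ _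
          _ ≤ ∑ _j ∈ Finset.range n, B := Finset.sum_le_sum fun j _ => hB _
          _ = n * B := by rw [Finset.sum_const, Finset.card_range, nsmul_eq_mul]
      calc |G n x - birkhoff φ (Gk k) n x| ≤ |G n x| + |birkhoff φ (Gk k) n x| := abs_sub _ _
        _ ≤ C + n * B := add_le_add (hC x) h1
    exact ((wg_supNorm_le hb).trans_lt ENNReal.ofReal_lt_top).ne
  have hA : ∀ k n (x : M), |G n x - birkhoff φ (Gk k) n x| ≤ A k n := fun k n x =>
    wg_abs_le_toReal_supNorm (hfin k n) x
  have hAnn : ∀ k n, 0 ≤ A k n := fun _ _ => ENNReal.toReal_nonneg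
  have hGdiff : ∀ ε : ℝ, 0 < ε → ∀ n : ℕ, ∀ x y : M, y ∈ bowenBall φ n x ε →
      |G n x - G n y| ≤ 2 * A (N (q ε)) n + n * c ε := by
    intro ε hε n x y hy
    have h1 : |birkhoff φ (Gk (N (q ε))) n x - birkhoff φ (Gk (N (q ε))) n y| ≤ n * c ε := by
      unfold birkhoff
      rw [← Finset.sum_sub_distrib]
      calc |∑ j ∈ Finset.range n, (Gk (N (q ε)) (φ^[j] x) - Gk (N (q ε)) (φ^[j] y))|
          ≤ ∑ j ∈ Finset.range n, |Gk (N (q ε)) (φ^[j] x) - Gk (N (q ε)) (φ^[j] y)| :=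
            Finset.abs_sum_le_sum_abs _ _
        _ ≤ ∑ _j ∈ Finset.range n, c ε := by
            refine Finset.sum_le_sum fun j hj => hmod ε hε _ _ ?_
            rw [dist_comm]
            exact hy j (Finset.mem_range.mp hj)
        _ = n * c ε := by rw [Finset.sum_const, Finset.card_range, nsmul_eq_mul]
    calc |G n x - G n y|
        ≤ |G n x - birkhoff φ (Gk (N (q ε))) n x|
          + |birkhoff φ (Gk (N (q ε))) n x - birkhoff φ (Gk (N (q ε))) n y|
          + |birkhoff φ (Gk (N (q ε))) n y - G n y| := by
          have := abs_sub_le (G n x) (birkhoff φ (Gk (N (q ε))) n x) (G n y)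
          have := abs_sub_le (birkhoff φ (Gk (N (q ε))) n x) (birkhoff φ (Gk (N (q ε))) n y) (G n y)
          linarith [abs_sub_le (G n x) (birkhoff φ (Gk (N (q ε))) n x) (G n y)]
      _ ≤ A (N (q ε)) n + n * c ε + A (N (q ε)) n := by
          have h2 := hA (N (q ε)) n x
          have h3 := hA (N (q ε)) n y
          rw [abs_sub_comm] at h3
          exact add_le_add (add_le_add h2 h1) h3
      _ = 2 * A (N (q ε)) n + n * c ε := by ring
  refine ⟨fun n ε => K n (ε / 2) * K n (2 * ε) * Real.exp (2 * A (N (q ε)) n + n * c ε),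
    ?_, ?_, ?_⟩
  · -- K' ≥ 1
    intro n ε hε
    dsimp only
    have h1 := hK1 n (ε / 2) (by linarith)
    have h2 := hK1 n (2 * ε) (by linarith)
    have h3 : (1 : ℝ) ≤ Real.exp (2 * A (N (q ε)) n + n * c ε) := by
      apply Real.one_le_exp
      have := hAnn (N (q ε)) n
      have := hcnn ε
      positivity
    calc (1:ℝ) ≤ K n (ε / 2) * K n (2 * ε) := by nlinarith
      _ ≤ K n (ε / 2) * K n (2 * ε) * Real.exp (2 * A (N (q ε)) n + ↑n * c ε) :=
        le_mul_of_one_le_right (by nlinarith) h3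
  · intro n hn ε hε x
    dsimp only
    have hεh : (0:ℝ) < ε / 2 := by linarith
    have hε2 : (0:ℝ) < 2 * ε := by linarith
    have hQ := (hae n hn (ε / 2) hεh).and (hae n hn (2 * ε) hε2)
    obtain ⟨y, hyB, hy1, hy2⟩ := wg_exists_good_point P hsupp
      (wg_isOpen_bowenBall φ hφ n x (ε / 2)) ⟨x, wg_self_mem_bowenBall φ n x hεh⟩ hQ
    have hyx : y ∈ bowenBall φ n x ε := fun k hk => lt_of_lt_of_le (hyB k hk) (by linarith)
    have hdiff := hGdiff ε hε n x y hyx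
    set D := 2 * A (N (q ε)) n + ↑n * c ε with hD
    have hDnn : 0 ≤ D := by
      have := hAnn (N (q ε)) n
      have := hcnn ε
      positivity
    have hKh := hK1 n (ε / 2) hεh
    have hK2 := hK1 n (2 * ε) hε2
    have hexpD := Real.one_le_exp hDnn
    have habs := abs_le.mp hdiff
    constructor
    · have hsub : bowenBall φ n y (ε / 2) ⊆ bowenBall φ n x ε := by
        intro z hz k hk
        calc dist (φ^[k] z) (φ^[k] x) ≤ dist (φ^[k] z) (φ^[k] y) + dist (φ^[k] y) (φ^[k] x) :=
              dist_triangle _ _ _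
          _ < ε / 2 + ε / 2 := add_lt_add (hz k hk) (hyB k hk)
          _ = ε := by ring
      have hK'pos : (0:ℝ) < K n (ε / 2) * K n (2 * ε) * Real.exp D := by positivity
      calc ENNReal.ofReal (Real.exp (G n x - ↑n * p)) /
            ENNReal.ofReal (K n (ε / 2) * K n (2 * ε) * Real.exp D)
          ≤ ENNReal.ofReal (Real.exp (G n y - ↑n * p)) / ENNReal.ofReal (K n (ε / 2)) := by
            rw [← ENNReal.ofReal_div_of_pos hK'pos, ← ENNReal.ofReal_div_of_pos (by linarith)]
            apply ENNReal.ofReal_le_ofReal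
            rw [div_le_div_iff₀ hK'pos (by linarith)]
            have hle : Real.exp (G n x - ↑n * p) ≤ Real.exp (G n y - ↑n * p) * Real.exp D := by
              rw [← Real.exp_add]
              exact Real.exp_le_exp.mpr (by linarith [habs.2])
            calc Real.exp (G n x - ↑n * p) * K n (ε / 2)
                ≤ (Real.exp (G n y - ↑n * p) * Real.exp D) * K n (ε / 2) :=
                  mul_le_mul_of_nonneg_right hle (by linarith)
              _ ≤ ((Real.exp (G n y - ↑n * p) * Real.exp D) * K n (ε / 2)) * K n (2 * ε) :=
                  le_mul_of_one_le_right
                    (mul_nonneg (mul_nonneg (Real.exp_pos _).le (Real.exp_pos _).le)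
                      (by linarith)) hK2
              _ = Real.exp (G n y - ↑n * p) * (K n (ε / 2) * K n (2 * ε) * Real.exp D) := by
                  ring
          _ ≤ P (bowenBall φ n y (ε / 2)) := hy1.1
          _ ≤ P (bowenBall φ n x ε) := measure_mono hsub
    · have hsub2 : bowenBall φ n x ε ⊆ bowenBall φ n y (2 * ε) := by
        intro z hz k hk
        calc dist (φ^[k] z) (φ^[k] y) ≤ dist (φ^[k] z) (φ^[k] x) + dist (φ^[k] x) (φ^[k] y) :=
              dist_triangle _ _ _
          _ < ε + ε / 2 := add_lt_add (hz k hk) (by rw [dist_comm]; exact hyB k hk)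
          _ ≤ 2 * ε := by linarith
      calc P (bowenBall φ n x ε) ≤ P (bowenBall φ n y (2 * ε)) := measure_mono hsub2
        _ ≤ ENNReal.ofReal (K n (2 * ε)) * ENNReal.ofReal (Real.exp (G n y - ↑n * p)) := hy2.2
        _ ≤ ENNReal.ofReal (K n (ε / 2) * K n (2 * ε) * Real.exp D) *
            ENNReal.ofReal (Real.exp (G n x - ↑n * p)) := by
            rw [← ENNReal.ofReal_mul (by linarith), ← ENNReal.ofReal_mul (by positivity)]
            apply ENNReal.ofReal_le_ofReal
            have hle : Real.exp (G n y - ↑n * p) ≤ Real.exp (G n x - ↑n * p) * Real.exp D := by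
              rw [← Real.exp_add]
              exact Real.exp_le_exp.mpr (by linarith [habs.1])
            calc K n (2 * ε) * Real.exp (G n y - ↑n * p)
                ≤ K n (2 * ε) * (Real.exp (G n x - ↑n * p) * Real.exp D) :=
                  mul_le_mul_of_nonneg_left hle (by linarith)
              _ ≤ (K n (2 * ε) * (Real.exp (G n x - ↑n * p) * Real.exp D)) * K n (ε / 2) :=
                  le_mul_of_one_le_right
                    (mul_nonneg (by linarith)
                      (mul_nonneg (Real.exp_pos _).le (Real.exp_pos _).le)) hKh
              _ = K n (ε / 2) * K n (2 * ε) * Real.exp D * Real.exp (G n x - ↑n * p) := by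
                  ring
  · -- the limsup condition
    have hfinal : ∀ ε : ℝ, 0 < ε →
        Filter.limsup (fun n : ℕ => ENNReal.ofReal
          (Real.log (K n (ε / 2) * K n (2 * ε) * Real.exp (2 * A (N (q ε)) n + ↑n * c ε)) / ↑n))
          atTop
        ≤ Filter.limsup (fun n : ℕ => ENNReal.ofReal (Real.log (K n (ε / 2)) / ↑n)) atTop
          + Filter.limsup (fun n : ℕ => ENNReal.ofReal (Real.log (K n (2 * ε)) / ↑n)) atTop
          + (2 * L (N (q ε)) + ENNReal.ofReal (c ε)) := by
      intro ε hε
      have hev : ∀ᶠ n : ℕ in atTop,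
          ENNReal.ofReal
            (Real.log (K n (ε / 2) * K n (2 * ε) * Real.exp (2 * A (N (q ε)) n + ↑n * c ε)) / ↑n)
          ≤ ENNReal.ofReal (Real.log (K n (ε / 2)) / ↑n)
            + ENNReal.ofReal (Real.log (K n (2 * ε)) / ↑n)
            + (2 * (supNorm (fun x => G n x - birkhoff φ (Gk (N (q ε))) n x) / (n : ℝ≥0∞))
               + ENNReal.ofReal (c ε)) := by
        filter_upwards [eventually_ge_atTop 1] with n hn
        have hnpos : (0:ℝ) < (n : ℝ) := by exact_mod_cast hn
        have hKh := hK1 n (ε / 2) (by linarith)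
        have hK2 := hK1 n (2 * ε) (by linarith)
        have hlog : Real.log (K n (ε / 2) * K n (2 * ε) * Real.exp (2 * A (N (q ε)) n + ↑n * c ε))
            = Real.log (K n (ε / 2)) + Real.log (K n (2 * ε))
              + (2 * A (N (q ε)) n + ↑n * c ε) := by
          rw [Real.log_mul (by positivity) (Real.exp_ne_zero _),
            Real.log_mul (by linarith) (by linarith), Real.log_exp]
        rw [hlog]
        have hsplit : (Real.log (K n (ε / 2)) + Real.log (K n (2 * ε))
              + (2 * A (N (q ε)) n + ↑n * c ε)) / (n : ℝ)
            = Real.log (K n (ε / 2)) / ↑n + Real.log (K n (2 * ε)) / ↑n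
              + (2 * A (N (q ε)) n / ↑n + c ε) := by
          field_simp
        rw [hsplit]
        refine le_trans ENNReal.ofReal_add_le (add_le_add ENNReal.ofReal_add_le ?_)
        refine le_trans ENNReal.ofReal_add_le (add_le_add ?_ le_rfl)
        rw [ENNReal.ofReal_div_of_pos hnpos]
        have heq : ENNReal.ofReal (2 * A (N (q ε)) n)
            = 2 * supNorm (fun x => G n x - birkhoff φ (Gk (N (q ε))) n x) := by
          rw [ENNReal.ofReal_mul (by norm_num), hAdef]
          dsimp only
          rw [ENNReal.ofReal_toReal (hfin _ _)]
          norm_num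
        rw [heq, ENNReal.ofReal_natCast, mul_div_assoc]
      refine le_trans (Filter.limsup_le_limsup hev) ?_
      refine le_trans (wg_limsup_add_le _ _) (add_le_add (wg_limsup_add_le _ _) ?_)
      refine le_trans (wg_limsup_add_le _ _) (add_le_add ?_ ?_)
      · rw [ENNReal.limsup_const_mul_of_ne_top (by norm_num : (2:ℝ≥0∞) ≠ ⊤)]
      · rw [Filter.limsup_const]
    have hhalf : Tendsto (fun ε : ℝ => ε / 2) (𝓝[>] (0:ℝ)) (𝓝[>] (0:ℝ)) := by
      refine tendsto_nhdsWithin_of_tendsto_nhds_of_eventually_within _ ?_ ?_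
      · have h := ((continuous_id.div_const (2:ℝ)).tendsto (0:ℝ)).mono_left
          (nhdsWithin_le_nhds (s := Set.Ioi (0:ℝ)))
        simpa using h
      · exact eventually_mem_nhdsWithin.mono fun x hx => by
          simp only [Set.mem_Ioi] at *; linarith
    have hdouble : Tendsto (fun ε : ℝ => 2 * ε) (𝓝[>] (0:ℝ)) (𝓝[>] (0:ℝ)) := by
      refine tendsto_nhdsWithin_of_tendsto_nhds_of_eventually_within _ ?_ ?_
      · have hc : Continuous fun ε : ℝ => 2 * ε := continuous_const.mul continuous_id
        have h := (hc.tendsto (0:ℝ)).mono_left (nhdsWithin_le_nhds (s := Set.Ioi (0:ℝ)))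
        simpa using h
      · exact eventually_mem_nhdsWithin.mono fun x hx => by
          simp only [Set.mem_Ioi] at *; linarith
    have hT1 : Tendsto (fun ε : ℝ =>
        Filter.limsup (fun n : ℕ => ENNReal.ofReal (Real.log (K n (ε / 2)) / ↑n)) atTop)
        (𝓝[>] (0:ℝ)) (𝓝 0) := hKlim.comp hhalf
    have hT2 : Tendsto (fun ε : ℝ =>
        Filter.limsup (fun n : ℕ => ENNReal.ofReal (Real.log (K n (2 * ε)) / ↑n)) atTop)
        (𝓝[>] (0:ℝ)) (𝓝 0) := hKlim.comp hdouble
    have hT34 : Tendsto (fun ε : ℝ => 2 * L (N (q ε)) + ENNReal.ofReal (c ε))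
        (𝓝[>] (0:ℝ)) (𝓝 0) := by
      rw [ENNReal.tendsto_nhds_zero]
      intro η hη
      have hη3 : (0:ℝ≥0∞) < η / 3 :=
        ENNReal.div_pos hη.ne' (by norm_num)
      obtain ⟨Mi, hMi⟩ := ENNReal.exists_inv_nat_lt hη3.ne'
      have hMi' : ((Mi : ℝ≥0∞) + 1)⁻¹ < η / 3 :=
        lt_of_le_of_lt (ENNReal.inv_le_inv.mpr le_self_add) hMi
      have h2 : ∀ᶠ ε : ℝ in 𝓝[>] (0:ℝ), ε < wgDelta d Mi :=
        Filter.eventually_iff_exists_mem.mpr ⟨Set.Iio (wgDelta d Mi),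
          nhdsWithin_le_nhds (Iio_mem_nhds (hδpos Mi)), fun y hy => hy⟩
      have hev : ∀ᶠ ε : ℝ in 𝓝[>] (0:ℝ), ε ∈ Set.Ioi (0:ℝ) ∧ ε < wgDelta d Mi :=
        eventually_mem_nhdsWithin.and h2
      filter_upwards [hev] with ε hεp
      obtain ⟨hε, hεM⟩ := hεp
      rw [Set.mem_Ioi] at hε
      obtain ⟨hge, hle⟩ := hqge Mi ε hε hεM.le
      have hc : c ε = ((q ε : ℝ) + 1)⁻¹ := by
        rw [hcdef]; dsimp only; rw [if_pos hle]
      have hLle : L (N (q ε)) ≤ ((Mi : ℝ≥0∞) + 1)⁻¹ := by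
        refine (hN (q ε)).le.trans (ENNReal.inv_le_inv.mpr ?_)
        exact add_le_add (by exact_mod_cast hge) le_rfl
      have hcle : ENNReal.ofReal (c ε) ≤ ((Mi : ℝ≥0∞) + 1)⁻¹ := by
        rw [hc, ENNReal.ofReal_inv_of_pos (by positivity)]
        refine ENNReal.inv_le_inv.mpr ?_
        rw [ENNReal.ofReal_add (by positivity) zero_le_one, ENNReal.ofReal_natCast,
          ENNReal.ofReal_one]
        exact add_le_add (by exact_mod_cast hge) le_rfl
      calc 2 * L (N (q ε)) + ENNReal.ofReal (c ε)
          ≤ 2 * ((Mi : ℝ≥0∞) + 1)⁻¹ + ((Mi : ℝ≥0∞) + 1)⁻¹ :=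
            add_le_add (mul_le_mul_right hLle 2) hcle
        _ = 3 * ((Mi : ℝ≥0∞) + 1)⁻¹ := by ring
        _ ≤ 3 * (η / 3) := mul_le_mul_right hMi'.le 3
        _ ≤ η := ENNReal.mul_div_le
    have hH : Tendsto (fun ε : ℝ =>
        Filter.limsup (fun n : ℕ => ENNReal.ofReal (Real.log (K n (ε / 2)) / ↑n)) atTop
        + Filter.limsup (fun n : ℕ => ENNReal.ofReal (Real.log (K n (2 * ε)) / ↑n)) atTop
        + (2 * L (N (q ε)) + ENNReal.ofReal (c ε))) (𝓝[>] (0:ℝ)) (𝓝 0) := by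
      have h := (hT1.add hT2).add hT34
      simpa using h
    refine tendsto_of_tendsto_of_tendsto_of_le_of_le' tendsto_const_nhds hH ?_ ?_
    · exact Filter.Eventually.of_forall fun ε => zero_le
    · exact eventually_mem_nhdsWithin.mono fun ε hε => hfinal ε hε
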